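/- Let X be a normed space, F ⊆ X nonempty closed convex with 0 ∈ F, Q ⊆ X nonempty convex, and suppose x̄ ∈ Q − F_∞. Then ∂T_Q^F(x̄) = N(x̄; Q − F_∞) ∩ C*, where C* = {x* ∈ X* : sup_{f∈F} ⟨−x*, f⟩ ≤ 1}. -/

import Mathlib

open scoped ENNReal Pointwise

/-- The asymptotic cone of `F` at base point `x`. -/
def asympCone {X : Type*} [NormedAddCommGroup X] [NormedSpace ℝ X]
    (F : Set X) (x : X) : Set X :=
  {d | ∀ t : ℝ, 0 < t → x + t • d ∈ F}

/-- The minimal time function `T_Q^F`. -/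
noncomputable def minTime {X : Type*} [NormedAddCommGroup X] [NormedSpace ℝ X]
    (F Q : Set X) (x : X) : ℝ≥0∞ :=
  sInf (ENNReal.ofReal '' {t : ℝ | 0 ≤ t ∧ ∃ f ∈ F, x + t • f ∈ Q})

lemma minTime_zero_aux {X : Type*} [NormedAddCommGroup X] [NormedSpace ℝ X]
    (F Q : Set X) {x : X} (hx : x ∈ Q - asympCone F 0) : minTime F Q x = 0 := by
  rw [Set.mem_sub] at hx
  obtain ⟨q, hq, d, hd, rfl⟩ := hx
  refine le_antisymm ?_ zero_le
  refine ENNReal.le_of_forall_pos_le_add fun ε hε _ => ?_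
  rw [zero_add]
  have hεpos : (0 : ℝ) < ε := hε
  have hmem : ((ε : ℝ)) ∈ {t : ℝ | 0 ≤ t ∧ ∃ f ∈ F, (q - d) + t • f ∈ Q} := by
    refine ⟨hεpos.le, (ε : ℝ)⁻¹ • d, ?_, ?_⟩
    · have := hd (ε : ℝ)⁻¹ (by positivity)
      simpa using this
    · rw [smul_smul, mul_inv_cancel₀ hεpos.ne', one_smul]
      simpa using hq
  calc minTime F Q (q - d) ≤ ENNReal.ofReal (ε : ℝ) :=
        sInf_le (Set.mem_image_of_mem _ hmem)
    _ = (ε : ℝ≥0∞) := ENNReal.ofReal_coe_nnreal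

theorem subdiff_minTime_at_mem_sub {X : Type*} [NormedAddCommGroup X] [NormedSpace ℝ X]
    (F : Set X) (hFne : F.Nonempty) (hFcl : IsClosed F) (hFconv : Convex ℝ F)
    (h0F : (0 : X) ∈ F)
    (Q : Set X) (hQne : Q.Nonempty) (hQconv : Convex ℝ Q)
    (xbar : X) (hxbar : xbar ∈ Q - asympCone F 0) :
    {x' : X →L[ℝ] ℝ | ∀ x : X,
        ENNReal.ofReal (x' (x - xbar)) + minTime F Q xbar ≤ minTime F Q x} =
      {x' : X →L[ℝ] ℝ | ∀ x ∈ Q - asympCone F 0, x' (x - xbar) ≤ 0} ∩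
      {x' : X →L[ℝ] ℝ | ∀ f ∈ F, (-x') f ≤ 1} := by
  have hT0 : minTime F Q xbar = 0 := minTime_zero_aux F Q hxbar
  have h0cone : (0 : X) ∈ asympCone F 0 := fun t ht => by simpa using h0F
  have hQsub : ∀ q ∈ Q, q ∈ Q - asympCone F 0 := fun q hq =>
    Set.mem_sub.2 ⟨q, hq, 0, h0cone, sub_zero q⟩
  ext x'
  simp only [Set.mem_setOf_eq, Set.mem_inter_iff]
  constructor
  · intro h
    refine ⟨fun x hx => ?_, fun f hf => ?_⟩
    · have hx0 := h x
      rw [hT0, add_zero, minTime_zero_aux F Q hx] at hx0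
      rw [le_zero_iff, ENNReal.ofReal_eq_zero] at hx0
      exact hx0
    · obtain ⟨q, hq, d, hd, hxq⟩ := Set.mem_sub.1 hxbar
      refine le_of_forall_pos_le_add fun s hs => ?_
      have hdmem : (1 / s) • d ∈ F := by simpa using hd (1 / s) (by positivity)
      have hF' : (1 / (1 + s)) • f + (s / (1 + s)) • ((1 / s) • d) ∈ F :=
        hFconv hf hdmem (by positivity) (by positivity) (by field_simp)
      have hcomb : (xbar - f) + (1 + s) • ((1 / (1 + s)) • f + (s / (1 + s)) • ((1 / s) • d))
          = q := by
        have h1 : (1 + s) • ((1 / (1 + s)) • f) = f := by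
          rw [smul_smul]
          rw [show (1 + s) * (1 / (1 + s)) = 1 by field_simp, one_smul]
        have h2 : (1 + s) • ((s / (1 + s)) • ((1 / s) • d)) = d := by
          rw [smul_smul, smul_smul]
          rw [show (1 + s) * (s / (1 + s)) * (1 / s) = 1 by field_simp, one_smul]
        rw [smul_add, h1, h2, ← hxq]
        abel
      have hle : minTime F Q (xbar - f) ≤ ENNReal.ofReal (1 + s) := by
        refine sInf_le (Set.mem_image_of_mem _ ?_)
        exact ⟨by positivity, _, hF', by rw [hcomb]; exact hq⟩
      have hkey := (h (xbar - f)).trans hle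
      rw [hT0, add_zero] at hkey
      rw [ENNReal.ofReal_le_ofReal_iff (by positivity)] at hkey
      have : x' (xbar - f - xbar) = -(x' f) := by
        rw [show xbar - f - xbar = -f by abel, map_neg]
      rw [this] at hkey
      simpa using hkey
  · rintro ⟨hN, hC⟩ x
    rw [hT0, add_zero]
    refine le_sInf fun b hb => ?_
    obtain ⟨t, ⟨ht0, f, hf, hxt⟩, rfl⟩ := hb
    refine ENNReal.ofReal_le_ofReal ?_
    have h1 := hN _ (hQsub _ hxt)
    have h2 : -(x' f) ≤ 1 := by simpa using hC f hf
    have h3 : x' (x - xbar) + t * x' f ≤ 0 := by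
      have := h1
      rw [show x + t • f - xbar = (x - xbar) + t • f by abel, map_add, map_smul] at this
      simpa using this
    have h4 : t * -(x' f) ≤ t * 1 := mul_le_mul_of_nonneg_left h2 ht0
    nlinarith
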